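/- For each i ∈ {0,…,n}, the map (π_0,…,π_{s−1}, 0_{c_{b_i}}) ↦ ((η(π_0),…,η(π_{s−1}), η(ω_i)), (ζ(π_0),…,ζ(π_{s−1}), ζ(ω_i))) is a bijection from P_{i,ρ} to F^{0_{c_{\overline{i+1}}}, 0_{c_i}}_> when i ∈ {1,…,n}, and to F^{0_{c_{\bar 1}}, (−1)_{c_{\bar 1}}}_> when i = 0; moreover this bijection preserves the size and the colour sequence of all the parts except the last. -/

import Mathlib

open Classical

open Classical in
/-- `chi P` is 1 if `P` holds and 0 otherwise. -/
noncomputable def chi (P : Prop) : ℤ := if P then 1 else 0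

/-- The involution `x ↦ 2n+1-x` on `{1,…,2n}` (the set `\overline{[n]}`). -/
def bar (n : ℕ) (x : ℤ) : ℤ := 2 * (n : ℤ) + 1 - x

/-- The energy formula `H'((x,y) ⊗ (x',y'))`. -/
noncomputable def Hprime (n : ℕ) (x y x' y' : ℤ) : ℤ :=
  if bar n y' ≠ x then
    chi (x' ≤ x) + chi (y' ≤ y) - chi (y' ≤ y ∧ x < y' ∧ x' ≤ x)
  else
    chi (x' < x) + chi (y' < y) - chi (y' < y ∧ x < y' ∧ x' < x)

/-- The energy function `H(b ⊗ b')` on the level 1 perfect crystal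
`B = {∅} ⊔ {(x,y) : x ≤ y ∈ \overline{[n]}}` of type `C_n^{(1)}`
(`none` plays the role of the vertex `∅`). -/
noncomputable def Hfun (n : ℕ) : Option (ℤ × ℤ) → Option (ℤ × ℤ) → ℤ
  | none, none => 0
  | none, some _ => 1
  | some _, none => 1
  | some p, some q => Hprime n p.1 p.2 q.1 q.2

/-- A primary-coloured integer `k_{c_u}` is the pair `(k, u)`. -/
abbrev PCInt : Type := ℤ × ℤ

/-- A secondary-coloured integer `k_{c_{x,y}}` is the pair `(k, (x, y))` with `x ≤ y`. -/
abbrev SCInt : Type := ℤ × (ℤ × ℤ)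

/-- The order on primary-coloured integers: `k_{c_u} ≥ l_{c_v} ↔ k - l ≥ χ(u < v)`. -/
def pge (a b : PCInt) : Prop := a.1 - b.1 ≥ if a.2 < b.2 then 1 else 0

/-- The strict order on primary-coloured integers: `k_{c_u} > l_{c_v} ↔ k - l ≥ χ(u ≤ v)`. -/
def pgt (a b : PCInt) : Prop := a.1 - b.1 ≥ if a.2 ≤ b.2 then 1 else 0

/-- `u` is a valid primary colour: `u ∈ O = {1,…,m}`. -/
def PVal (m : ℕ) (u : ℤ) : Prop := 1 ≤ u ∧ u ≤ (m : ℤ)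

/-- `(x,y)` is a valid secondary colour: `x ≤ y ∈ O = {1,…,m}`. -/
def SVal (m : ℕ) (c : ℤ × ℤ) : Prop := 1 ≤ c.1 ∧ c.1 ≤ c.2 ∧ c.2 ≤ (m : ℤ)

/-- `η(2k_{c_{x,y}}) = k_{c_y}` and `η((2k+1)_{c_{x,y}}) = (k+1)_{c_x}`. -/
def etaP (a : SCInt) : PCInt :=
  if a.1 % 2 = 0 then (a.1 / 2, a.2.2) else ((a.1 - 1) / 2 + 1, a.2.1)

/-- `ζ(2k_{c_{x,y}}) = k_{c_x}` and `ζ((2k+1)_{c_{x,y}}) = k_{c_y}`. -/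
def zetaP (a : SCInt) : PCInt :=
  if a.1 % 2 = 0 then (a.1 / 2, a.2.1) else ((a.1 - 1) / 2, a.2.2)


/-- The set of vertices `B = {∅} ⊔ {(x,y) : x ≤ y ∈ \overline{[n]}}` (as colours `c_b`). -/
def BSet (n : ℕ) : Set (Option (ℤ × ℤ)) :=
  {none} ∪ {b | ∃ x y : ℤ, b = some (x, y) ∧ 1 ≤ x ∧ x ≤ y ∧ y ≤ 2 * (n : ℤ)}

/-- The secondary colours `S = C ∖ {c_∅}`. -/
def SColSet (n : ℕ) : Set (Option (ℤ × ℤ)) :=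
  {b | ∃ x y : ℤ, b = some (x, y) ∧ 1 ≤ x ∧ x ≤ y ∧ y ≤ 2 * (n : ℤ)}

/-- The vertex `b_i`: `b_0 = ∅` and `b_i = (i, \bar i)` for `1 ≤ i ≤ n`. -/
def bvert (n i : ℕ) : Option (ℤ × ℤ) :=
  if i = 0 then none else some ((i : ℤ), bar n (i : ℤ))

/-- The function `ρ` on secondary colours:
`ρ(c_{x',y'},c_{x,y}) = χ(x ≥ x') + χ(y ≥ y') - χ(y ≥ y' > x ≥ x')`. -/
noncomputable def rhoS : Option (ℤ × ℤ) → Option (ℤ × ℤ) → ℤ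
  | some p, some q =>
      chi (p.1 ≤ q.1) + chi (p.2 ≤ q.2) - chi (p.2 ≤ q.2 ∧ q.1 < p.2 ∧ p.1 ≤ q.1)
  | _, _ => 0

/-- The set `P^{≫}_{c_{b_i}}` of grounded partitions with ground `c_{b_i}` and relation
`≫` given by the energy `H`: sequences `(π_0,…,π_{s-1}, π_s = 0_{c_{b_i}})` with colours in
`C`, with `π_{s-1} ≠ 0_{c_{b_i}}` when `s > 0`, and `k - k' ≥ H(b' ⊗ b)` for consecutive
parts `k_{c_b}, k'_{c_{b'}}`. -/
noncomputable def PGround (n i : ℕ) : Set (List (ℤ × Option (ℤ × ℤ))) :=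
  {π | π.getLast? = some (0, bvert n i) ∧
       (∀ a ∈ π, a.2 ∈ BSet n) ∧
       π.Chain' (fun a b => a.1 - b.1 ≥ Hfun n b.2 a.2) ∧
       (π.dropLast ≠ [] → π.dropLast.getLast? ≠ some (0, bvert n i))}

/-- The set `P_{i,ρ}`: sequences `(π_0,…,π_{s-1}, 0_{c_{b_i}})` with `π_0,…,π_{s-1}`
coloured by secondary colours, `|π_j| - |π_{j+1}| ≥ ρ_i(c(π_j),c(π_{j+1}))`, and the last
part `π_{s-1} = k_{c_b}` satisfying `k ≥ H(b_i ⊗ b)` if `c_b ≠ c_{b_i}` and `k ≥ 1` if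
`c_b = c_{b_i}`. -/
noncomputable def PiRho (n i : ℕ) : Set (List (ℤ × Option (ℤ × ℤ))) :=
  {π | π.getLast? = some (0, bvert n i) ∧
       (∀ a ∈ π.dropLast, a.2 ∈ SColSet n) ∧
       π.dropLast.Chain' (fun a b => a.1 - b.1 ≥ rhoS a.2 b.2) ∧
       (∀ a, π.dropLast.getLast? = some a →
          ((a.2 = bvert n i → 1 ≤ a.1) ∧
           (a.2 ≠ bvert n i → Hfun n (bvert n i) a.2 ≤ a.1)))}


/-- `F^{k_c,l_d}_>`: the `C_n^{(1)}`-Frobenius partitions with relation `>` and ground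
`k_c, l_d` — pairs `(μ,ν)` of sequences of primary-coloured integers of the same length,
strictly decreasing for `>`, with last parts `k_c` and `l_d`, and satisfying
`ν_j + 1 ≥ μ_j ≥ ν_j` for all `j < s`. -/
def FrobSet (m : ℕ) (kc ld : PCInt) : Set (List PCInt × List PCInt) :=
  {mn | mn.1.length = mn.2.length ∧
        mn.1.getLast? = some kc ∧ mn.2.getLast? = some ld ∧
        (∀ a ∈ mn.1, PVal m a.2) ∧ (∀ a ∈ mn.2, PVal m a.2) ∧
        mn.1.Chain' pgt ∧ mn.2.Chain' pgt ∧
        (∀ j : ℕ, j + 1 < mn.1.length → ∀ a b : PCInt,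
          mn.1[j]? = some a → mn.2[j]? = some b →
          pge a b ∧ pge (b.1 + 1, b.2) a)}


/-- `η(ω_i)`: equal to `0_{c_{\bar 1}}` for `i = 0` and `0_{c_{\overline{i+1}}}` for
`1 ≤ i ≤ n`. -/
def grEta (n i : ℕ) : PCInt :=
  if i = 0 then ((0 : ℤ), 2 * (n : ℤ)) else ((0 : ℤ), 2 * (n : ℤ) - (i : ℤ))

/-- `ζ(ω_i)`: equal to `(-1)_{c_{\bar 1}}` for `i = 0` and `0_{c_i}` for `1 ≤ i ≤ n`. -/
def grZeta (n i : ℕ) : PCInt :=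
  if i = 0 then ((-1 : ℤ), 2 * (n : ℤ)) else ((0 : ℤ), (i : ℤ))

section Aux
def Ee (a : ℤ × Option (ℤ × ℤ)) : PCInt := etaP (a.1, a.2.getD (0, 0))
def Zz (a : ℤ × Option (ℤ × ℤ)) : PCInt := zetaP (a.1, a.2.getD (0, 0))
def decP (a b : PCInt) : ℤ × Option (ℤ × ℤ) :=
  (a.1 + b.1, if a.1 = b.1 then some (b.2, a.2) else some (a.2, b.2))

def SOK (a : ℤ × Option (ℤ × ℤ)) : Prop := ∃ x y : ℤ, a.2 = some (x, y) ∧ x ≤ y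

lemma core' (a b : ℤ × Option (ℤ × ℤ)) (ha : SOK a) (hb : SOK b) :
    a.1 - b.1 ≥ rhoS a.2 b.2 ↔ pgt (Ee a) (Ee b) ∧ pgt (Zz a) (Zz b) := by
  obtain ⟨x, y, hc, hxy⟩ := ha
  obtain ⟨x', y', hc', hxy'⟩ := hb
  obtain ⟨k, c⟩ := a; obtain ⟨l, c'⟩ := b
  simp only at hc hc'; subst hc hc'
  simp only [Ee, Zz, rhoS, chi, pgt, etaP, zetaP, Option.getD_some]
  split_ifs <;> omega

lemma dec_enc (a : ℤ × Option (ℤ × ℤ)) (h : SOK a) : decP (Ee a) (Zz a) = a := by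
  obtain ⟨x, y, hc, hxy⟩ := h
  obtain ⟨k, c⟩ := a
  simp only at hc; subst hc
  simp only [Ee, Zz, decP, etaP, zetaP, Option.getD_some, Prod.mk.injEq, Option.some.injEq]
  split_ifs <;>
    first
      | (refine ⟨by omega, rfl⟩)
      | (exfalso; omega)

lemma enc_dec (a b : PCInt) (h1 : pge a b) (h2 : pge (b.1 + 1, b.2) a) :
    Ee (decP a b) = a ∧ Zz (decP a b) = b := by
  obtain ⟨k, u⟩ := a; obtain ⟨l, v⟩ := b
  simp only [Ee, Zz, decP, pge, etaP, zetaP] at *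
  split_ifs at * <;>
    simp_all only [Option.getD_some, Prod.mk.injEq] <;>
    first | trivial | omega | (exfalso; omega) |
      (constructor <;> constructor <;> first | omega | rfl | trivial)

lemma dec_col (m : ℕ) (a b : PCInt) (h1 : pge a b) (h2 : pge (b.1 + 1, b.2) a)
    (ha : PVal m a.2) (hb : PVal m b.2) :
    ∃ x y : ℤ, (decP a b).2 = some (x, y) ∧ 1 ≤ x ∧ x ≤ y ∧ y ≤ (m : ℤ) := by
  obtain ⟨k, u⟩ := a; obtain ⟨l, v⟩ := b
  simp only [decP, pge, PVal] at *
  split_ifs at * <;>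
    first
      | exact ⟨v, u, rfl, by omega⟩
      | exact ⟨u, v, rfl, by omega⟩

lemma cross' (a : ℤ × Option (ℤ × ℤ)) (h : SOK a) :
    pge (Ee a) (Zz a) ∧ pge ((Zz a).1 + 1, (Zz a).2) (Ee a) := by
  obtain ⟨x, y, hc, hxy⟩ := h
  obtain ⟨k, c⟩ := a
  simp only at hc; subst hc
  simp only [Ee, Zz, pge, etaP, zetaP, Option.getD_some]
  split_ifs <;> omega

lemma col_PVal (m : ℕ) (a : ℤ × Option (ℤ × ℤ)) (x y : ℤ) (hc : a.2 = some (x, y))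
    (h1 : 1 ≤ x) (h2 : x ≤ y) (h3 : y ≤ (m : ℤ)) :
    PVal m (Ee a).2 ∧ PVal m (Zz a).2 := by
  obtain ⟨k, c⟩ := a
  simp only at hc; subst hc
  simp only [Ee, Zz, PVal, etaP, zetaP, Option.getD_some]
  split_ifs <;> constructor <;> constructor <;> omega

lemma bdry (n i : ℕ) (hn : 2 ≤ n) (hi : i ≤ n) (a : ℤ × Option (ℤ × ℤ)) (x y : ℤ)
    (hc : a.2 = some (x, y)) (h1 : 1 ≤ x) (h2 : x ≤ y) (h3 : y ≤ 2 * (n : ℤ)) :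
    ((a.2 = bvert n i → 1 ≤ a.1) ∧ (a.2 ≠ bvert n i → Hfun n (bvert n i) a.2 ≤ a.1))
    ↔ pgt (Ee a) (grEta n i) ∧ pgt (Zz a) (grZeta n i) := by
  obtain ⟨k, c⟩ := a
  simp only at hc; subst hc
  rcases Nat.eq_zero_or_pos i with h | h
  · subst h
    have hH : Hfun n (bvert n 0) (some (x, y)) = 1 := rfl
    rw [hH]
    simp only [bvert, grEta, grZeta, Ee, Zz, pgt, etaP, zetaP, Option.getD_some,
      if_true, if_false, ite_true, ite_false, reduceIte, reduceCtorEq, ne_eq]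
    try simp only [false_implies, not_false_eq_true, true_implies, true_and]
    split_ifs <;> omega
  · have hne : i ≠ 0 := Nat.pos_iff_ne_zero.mp h
    simp only [bvert, hne, grEta, grZeta, Ee, Zz, pgt, etaP, zetaP, Option.getD_some,
      if_true, if_false, ite_true, ite_false, reduceIte,
      Hfun, Hprime, bar, chi, ne_eq, Option.some.injEq, Prod.mk.injEq, apply_ite Prod.fst, apply_ite Prod.snd]
    split_ifs <;> omega

lemma sz (a : ℤ × Option (ℤ × ℤ)) : a.1 = (Ee a).1 + (Zz a).1 := by
  simp only [Ee, Zz, etaP, zetaP]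
  split_ifs <;> omega

lemma colmul (a : ℤ × Option (ℤ × ℤ)) :
    ({(a.2.getD (0, 0)).1, (a.2.getD (0, 0)).2} : Multiset ℤ) = {(Ee a).2} + {(Zz a).2} := by
  simp only [Ee, Zz, etaP, zetaP]
  split_ifs <;> simp [Multiset.insert_eq_cons, Multiset.singleton_add] <;>
    exact Multiset.cons_swap _ _ _

end Aux

section Lists
variable {α : Type*}

lemma chain'_iff_of_mem {R S : α → α → Prop} {P : α → Prop} {L : List α}
    (hP : ∀ a ∈ L, P a) (hRS : ∀ a b, P a → P b → (R a b ↔ S a b)) :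
    L.Chain' R ↔ L.Chain' S := by
  simp only [List.Chain'] at *
  induction L with
  | nil => simp
  | cons a t ih =>
    cases t with
    | nil => simp
    | cons b t' =>
      rw [List.isChain_cons_cons, List.isChain_cons_cons,
        hRS a b (hP a (by simp)) (hP b (by simp)),
        ih (fun x hx => hP x (List.mem_cons_of_mem _ hx))]

lemma zip_dec_self (n : ℕ) (σ : List (ℤ × Option (ℤ × ℤ))) (hσ : ∀ a ∈ σ, SOK a) :
    List.zipWith decP (σ.map Ee) (σ.map Zz) = σ := by
  induction σ with
  | nil => rfl
  | cons a t ih =>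
    simp only [List.map_cons, List.zipWith_cons_cons]
    rw [dec_enc a (hσ a (by simp)), ih (fun x hx => hσ x (List.mem_cons_of_mem _ hx))]

lemma sum_fst (L : List (ℤ × Option (ℤ × ℤ))) :
    (L.map Prod.fst).sum = ((L.map Ee).map Prod.fst).sum + ((L.map Zz).map Prod.fst).sum := by
  induction L with
  | nil => simp
  | cons a t ih =>
    simp only [List.map_cons, List.sum_cons, ih]
    have := sz a
    omega

lemma sum_col (L : List (ℤ × Option (ℤ × ℤ))) :
    (L.map (fun a => ({(a.2.getD (0, 0)).1, (a.2.getD (0, 0)).2} : Multiset ℤ))).sum =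
      ((L.map (fun a => (Ee a).2) : List ℤ) : Multiset ℤ) +
      ((L.map (fun a => (Zz a).2) : List ℤ) : Multiset ℤ) := by
  induction L with
  | nil => simp
  | cons a t ih =>
    simp only [List.map_cons, List.sum_cons, ih, ← Multiset.cons_coe,
      ← Multiset.singleton_add, colmul a]
    abel

end Lists

section Main

lemma scol_sok {n : ℕ} {c : Option (ℤ × ℤ)} (h : c ∈ SColSet n) :
    ∃ x y : ℤ, c = some (x, y) ∧ 1 ≤ x ∧ x ≤ y ∧ y ≤ 2 * (n : ℤ) := h

lemma grEta_PVal (n i : ℕ) (hn : 2 ≤ n) (hi : i ≤ n) : PVal (2 * n) (grEta n i).2 := by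
  simp only [grEta, PVal]
  split_ifs <;> constructor <;> push_cast <;> omega

lemma grZeta_PVal (n i : ℕ) (hn : 2 ≤ n) (hi : i ≤ n) : PVal (2 * n) (grZeta n i).2 := by
  simp only [grZeta, PVal]
  split_ifs with h <;> constructor <;> push_cast <;> omega

lemma mapsto_main (n i : ℕ) (hn : 2 ≤ n) (hi : i ≤ n) (π : List (ℤ × Option (ℤ × ℤ)))
    (hπ : π ∈ PiRho n i) :
    ((π.dropLast.map Ee) ++ [grEta n i], (π.dropLast.map Zz) ++ [grZeta n i]) ∈
      FrobSet (2 * n) (grEta n i) (grZeta n i) := by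
  obtain ⟨hlast, hcol, hch, hbd⟩ := hπ
  set L := π.dropLast with hL
  have hSOK : ∀ a ∈ L, SOK a := by
    intro a ha
    obtain ⟨x, y, hc, h1, h2, h3⟩ := scol_sok (hcol a ha)
    exact ⟨x, y, hc, h2⟩
  have hval : ∀ a ∈ L, PVal (2 * n) (Ee a).2 ∧ PVal (2 * n) (Zz a).2 := by
    intro a ha
    obtain ⟨x, y, hc, h1, h2, h3⟩ := scol_sok (hcol a ha)
    exact col_PVal (2 * n) a x y hc h1 h2 (by push_cast; omega)
  -- the transferred chain
  have hch2 : L.Chain' (fun a b => pgt (Ee a) (Ee b) ∧ pgt (Zz a) (Zz b)) :=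
    (chain'_iff_of_mem hSOK (fun a b ha hb => core' a b ha hb)).mp hch
  -- the boundary condition
  have hbd2 : ∀ a, L.getLast? = some a → pgt (Ee a) (grEta n i) ∧ pgt (Zz a) (grZeta n i) := by
    intro a ha
    obtain ⟨x, y, hc, h1, h2, h3⟩ :=
      scol_sok (hcol a (List.mem_of_mem_getLast? (l := L) (a := a) ha))
    exact (bdry n i hn hi a x y hc h1 h2 h3).mp (hbd a ha)
  refine ⟨by simp, List.getLast?_concat, List.getLast?_concat, ?_, ?_, ?_, ?_, ?_⟩
  · intro a ha
    rcases List.mem_append.mp ha with h | h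
    · obtain ⟨b, hb, rfl⟩ := List.mem_map.mp h
      exact (hval b hb).1
    · simp only [List.mem_singleton] at h
      subst h; exact grEta_PVal n i hn hi
  · intro a ha
    rcases List.mem_append.mp ha with h | h
    · obtain ⟨b, hb, rfl⟩ := List.mem_map.mp h
      exact (hval b hb).2
    · simp only [List.mem_singleton] at h
      subst h; exact grZeta_PVal n i hn hi
  · simp only [List.Chain']
    rw [List.isChain_append]
    refine ⟨?_, List.isChain_singleton _, ?_⟩
    · rw [List.isChain_map]
      exact hch2.imp (fun _ _ h => h.1)
    · intro x hx y hy
      simp only [List.head?_cons, Option.mem_some_iff] at hy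
      subst hy
      cases hLl : L.getLast? with
      | none => simp [List.getLast?_map, hLl] at hx
      | some a =>
        simp only [List.getLast?_map, hLl, Option.map_some, Option.mem_def,
          Option.some.injEq] at hx
        subst hx
        exact (hbd2 a hLl).1
  · simp only [List.Chain']
    rw [List.isChain_append]
    refine ⟨?_, List.isChain_singleton _, ?_⟩
    · rw [List.isChain_map]
      exact hch2.imp (fun _ _ h => h.2)
    · intro x hx y hy
      simp only [List.head?_cons, Option.mem_some_iff] at hy
      subst hy
      cases hLl : L.getLast? with
      | none => simp [List.getLast?_map, hLl] at hx
      | some a =>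
        simp only [List.getLast?_map, hLl, Option.map_some, Option.mem_def,
          Option.some.injEq] at hx
        subst hx
        exact (hbd2 a hLl).2
  · intro j hj a b ha hb
    have hjL : j < L.length := by simp at hj; omega
    rw [List.getElem?_append_left (by simp [hjL]),
      List.getElem?_map, List.getElem?_eq_getElem hjL] at ha
    rw [List.getElem?_append_left (by simp [hjL]),
      List.getElem?_map, List.getElem?_eq_getElem hjL] at hb
    simp only [Option.map_some, Option.some.injEq] at ha hb
    subst ha hb
    exact cross' _ (hSOK _ (List.getElem_mem hjL))

end Main

section Surj

lemma surj_main (n i : ℕ) (hn : 2 ≤ n) (hi : i ≤ n) (μ ν : List PCInt)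
    (hp : (μ, ν) ∈ FrobSet (2 * n) (grEta n i) (grZeta n i)) :
    ∃ π ∈ PiRho n i,
      ((π.dropLast.map Ee) ++ [grEta n i], (π.dropLast.map Zz) ++ [grZeta n i]) = (μ, ν) := by
  obtain ⟨hlen, hμl, hνl, hPμ, hPν, hchμ, hchν, hcross⟩ := hp
  have hlen' : μ.length = ν.length := hlen
  have hchμ' : μ.Chain' pgt := hchμ
  have hchν' : ν.Chain' pgt := hchν
  have hμ : μ.dropLast ++ [grEta n i] = μ := List.dropLast_append_getLast? _ hμl
  have hν : ν.dropLast ++ [grZeta n i] = ν := List.dropLast_append_getLast? _ hνl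
  set M := μ.dropLast with hM
  set N := ν.dropLast with hN
  have hlenμ : μ.length = M.length + 1 := by
    conv_lhs => rw [← hμ]
    simp
  have hlenν : ν.length = N.length + 1 := by
    conv_lhs => rw [← hν]
    simp
  have hMN : M.length = N.length := by omega
  -- cross conditions at each index
  have hc : ∀ j, (hj : j < M.length) → (hj' : j < N.length) →
      pge M[j] N[j] ∧ pge ((N[j]).1 + 1, (N[j]).2) M[j] := by
    intro j hj hj'
    refine hcross j (show j + 1 < μ.length by omega) M[j] N[j] ?_ ?_
    · show μ[j]? = _
      conv_lhs => rw [← hμ]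
      rw [List.getElem?_append_left (by simpa using hj),
        List.getElem?_eq_getElem hj]
    · show ν[j]? = _
      conv_lhs => rw [← hν]
      rw [List.getElem?_append_left (by simpa using hj'),
        List.getElem?_eq_getElem hj']
  have hPM : ∀ a ∈ M, PVal (2 * n) a.2 := fun a ha => hPμ a ((List.dropLast_sublist μ).subset ha)
  have hPN : ∀ a ∈ N, PVal (2 * n) a.2 := fun a ha => hPν a ((List.dropLast_sublist ν).subset ha)
  -- the preimage
  set L := List.zipWith decP M N with hLdef
  have hLlen : L.length = M.length := by
    simp [hLdef, hMN]
  have hLget : ∀ j, (hj : j < L.length) →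
      L[j] = decP (M[j]'(by omega)) (N[j]'(by omega)) := by
    intro j hj
    simp [hLdef, List.getElem_zipWith]
  have hEe : ∀ j, (hj : j < L.length) →
      Ee L[j] = M[j]'(by omega) ∧ Zz L[j] = N[j]'(by omega) := by
    intro j hj
    rw [hLget j hj]
    exact enc_dec _ _ (hc j (by omega) (by omega)).1 (hc j (by omega) (by omega)).2
  have hLcol : ∀ a ∈ L, a.2 ∈ SColSet n := by
    intro a ha
    obtain ⟨j, hj, rfl⟩ := List.mem_iff_getElem.mp ha
    rw [hLget j hj]
    have hj1 : j < M.length := by omega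
    have hj2 : j < N.length := by omega
    obtain ⟨x, y, h1, h2, h3, h4⟩ :=
      dec_col (2 * n) M[j] N[j] (hc j hj1 hj2).1 (hc j hj1 hj2).2
        (hPM _ (List.getElem_mem hj1)) (hPN _ (List.getElem_mem hj2))
    exact ⟨x, y, h1, h2, h3, by push_cast at h4; omega⟩
  have hSOK : ∀ a ∈ L, SOK a := by
    intro a ha
    obtain ⟨x, y, h1, h2, h3, h4⟩ := hLcol a ha
    exact ⟨x, y, h1, h3⟩
  -- chains on M and N
  have hchM : M.Chain' pgt ∧ ∀ x ∈ M.getLast?, pgt x (grEta n i) := by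
    rw [← hμ] at hchμ'
    obtain ⟨h1, _, h3⟩ := List.isChain_append.mp hchμ'
    exact ⟨h1, fun x hx => h3 x hx _ rfl⟩
  have hchN : N.Chain' pgt ∧ ∀ x ∈ N.getLast?, pgt x (grZeta n i) := by
    rw [← hν] at hchν'
    obtain ⟨h1, _, h3⟩ := List.isChain_append.mp hchν'
    exact ⟨h1, fun x hx => h3 x hx _ rfl⟩
  refine ⟨L ++ [(0, bvert n i)], ⟨?_, ?_, ?_, ?_⟩, ?_⟩
  · exact List.getLast?_concat
  · rw [List.dropLast_concat]
    exact hLcol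
  · rw [List.dropLast_concat]
    rw [chain'_iff_of_mem hSOK (fun a b ha hb => core' a b ha hb)]
    simp only [List.Chain']
    rw [List.isChain_iff_getElem]
    intro j hj
    have hj1 : j < L.length := by omega
    have hj2 : j + 1 < L.length := by omega
    rw [(hEe j hj1).1, (hEe j hj1).2, (hEe (j+1) hj2).1, (hEe (j+1) hj2).2]
    have h1 := List.isChain_iff_getElem.mp hchM.1 j (by omega)
    have h2 := List.isChain_iff_getElem.mp hchN.1 j (by omega)
    exact ⟨h1, h2⟩
  · rw [List.dropLast_concat]
    intro a ha
    have hL0 : L ≠ [] := by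
      intro h
      rw [h] at ha
      simp at ha
    have hlpos : 0 < L.length := List.length_pos_iff.mpr hL0
    have hj1 : L.length - 1 < L.length := by omega
    have haL : a = L[L.length - 1] := by
      rw [List.getLast?_eq_getElem?, List.getElem?_eq_getElem hj1] at ha
      exact (Option.some.injEq _ _ ▸ ha).symm
    obtain ⟨x, y, h1, h2, h3, h4⟩ := hLcol a (haL ▸ List.getElem_mem hj1)
    rw [bdry n i hn hi a x y h1 h2 h3 h4]
    have hMlast : M.getLast? = some (M[L.length - 1]'(by omega)) := by
      rw [List.getLast?_eq_getElem?, show M.length - 1 = L.length - 1 from by omega]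
      exact List.getElem?_eq_getElem (by omega)
    have hNlast : N.getLast? = some (N[L.length - 1]'(by omega)) := by
      rw [List.getLast?_eq_getElem?, show N.length - 1 = L.length - 1 from by omega]
      exact List.getElem?_eq_getElem (by omega)
    rw [haL, (hEe _ hj1).1, (hEe _ hj1).2]
    exact ⟨hchM.2 _ hMlast, hchN.2 _ hNlast⟩
  · simp only [List.dropLast_concat, Prod.mk.injEq]
    constructor
    · conv_rhs => rw [← hμ]
      congr 1
      refine List.ext_getElem (by simp [hLlen]) ?_
      intro j h1 h2
      simp only [List.getElem_map]
      exact (hEe j (by simpa using h1)).1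
    · conv_rhs => rw [← hν]
      congr 1
      refine List.ext_getElem (by simp [hLlen, hMN]) ?_
      intro j h1 h2
      simp only [List.getElem_map]
      exact (hEe j (by simpa using h1)).2

end Surj


/-- for each `i ∈ {0,…,n}`, the map
`(π_0,…,π_{s-1}, 0_{c_{b_i}}) ↦ ((η(π_0),…,η(π_{s-1}),η(ω_i)), (ζ(π_0),…,ζ(π_{s-1}),ζ(ω_i)))`
is a bijection from `P_{i,ρ}` to `F^{0_{c_{\overline{i+1}}},0_{c_i}}_>` (for `i ≥ 1`),
resp. `F^{0_{c_{\bar 1}},(-1)_{c_{\bar 1}}}_>` (for `i = 0`), preserving the size and the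
colour sequence of all the parts except the last. -/
theorem stmt_15 (n : ℕ) (hn : 2 ≤ n) (i : ℕ) (hi : i ≤ n) :
    Set.BijOn
      (fun π : List (ℤ × Option (ℤ × ℤ)) =>
        ((π.dropLast.map (fun a => etaP (a.1, a.2.getD (0, 0)))) ++ [grEta n i],
         (π.dropLast.map (fun a => zetaP (a.1, a.2.getD (0, 0)))) ++ [grZeta n i]))
      (PiRho n i) (FrobSet (2 * n) (grEta n i) (grZeta n i)) ∧
    ∀ π ∈ PiRho n i,
      -- the size of all the parts except the last is preserved
      ((π.dropLast.map Prod.fst).sum =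
        ((π.dropLast.map (fun a => etaP (a.1, a.2.getD (0, 0)))).map Prod.fst).sum +
        ((π.dropLast.map (fun a => zetaP (a.1, a.2.getD (0, 0)))).map Prod.fst).sum) ∧
      -- the colour sequence of all the parts except the last is preserved
      ((π.dropLast.map
          (fun a => ({(a.2.getD (0, 0)).1, (a.2.getD (0, 0)).2} : Multiset ℤ))).sum =
        ((π.dropLast.map (fun a => (etaP (a.1, a.2.getD (0, 0))).2) : List ℤ) : Multiset ℤ) +
        ((π.dropLast.map (fun a => (zetaP (a.1, a.2.getD (0, 0))).2) : List ℤ) : Multiset ℤ)) := by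
  constructor
  · refine ⟨?_, ?_, ?_⟩
    · intro π hπ
      exact mapsto_main n i hn hi π hπ
    · intro π hπ π' hπ' heq
      have h1 : π.dropLast.map Ee = π'.dropLast.map Ee := by
        have h := congrArg (fun p : List PCInt × List PCInt => p.1.dropLast) heq
        change List.map (fun a => etaP (a.1, a.2.getD (0, 0))) π.dropLast = List.map (fun a => etaP (a.1, a.2.getD (0, 0))) π'.dropLast
        simpa using h
      have h2 : π.dropLast.map Zz = π'.dropLast.map Zz := by
        have h := congrArg (fun p : List PCInt × List PCInt => p.2.dropLast) heq
        change List.map (fun a => zetaP (a.1, a.2.getD (0, 0))) π.dropLast = List.map (fun a => zetaP (a.1, a.2.getD (0, 0))) π'.dropLast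
        simpa using h
      have hS : ∀ a ∈ π.dropLast, SOK a := by
        intro a ha
        obtain ⟨x, y, hc, hx1, hx2, hx3⟩ := scol_sok (hπ.2.1 a ha)
        exact ⟨x, y, hc, hx2⟩
      have hS' : ∀ a ∈ π'.dropLast, SOK a := by
        intro a ha
        obtain ⟨x, y, hc, hx1, hx2, hx3⟩ := scol_sok (hπ'.2.1 a ha)
        exact ⟨x, y, hc, hx2⟩
      have hπd : π.dropLast = π'.dropLast := by
        rw [← zip_dec_self n π.dropLast hS, ← zip_dec_self n π'.dropLast hS', h1, h2]
      have e1 : π.dropLast ++ [((0 : ℤ), bvert n i)] = π :=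
        List.dropLast_append_getLast? _ hπ.1
      have e2 : π'.dropLast ++ [((0 : ℤ), bvert n i)] = π' :=
        List.dropLast_append_getLast? _ hπ'.1
      rw [← e1, ← e2, hπd]
    · intro p hp
      obtain ⟨μ, ν⟩ := p
      obtain ⟨π, hπ, hΦ⟩ := surj_main n i hn hi μ ν hp
      exact ⟨π, hπ, hΦ⟩
  · intro π _
    exact ⟨sum_fst π.dropLast, sum_col π.dropLast⟩
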